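/- Let λ, μ ∈ ℂ with 0 < |λ| < 1 < |μ|, and let F = (F₁, F₂) be holomorphic on the open polydisk 𝔻 × 𝔻 ⊂ ℂ² with F(x,0) = (λx, 0) and F(0,y) = (0, μy) for all x, y ∈ 𝔻. Then there exist r ∈ (0,1) and a constant C > 0 such that for every n ∈ ℕ the following holds: if (p_k)_{0 ≤ k ≤ n} is a sequence of points of the polydisk {|x| ≤ r} × {|y| ≤ r} with p_{k+1} = F(p_k) for 0 ≤ k ≤ n−1, and p_k = (x_k, y_k), then |x_k| ≤ C·|λ|^k and |y_k| ≤ C·|μ|^{−(n−k)} for all 0 ≤ k ≤ n. -/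

import Mathlib

set_option maxHeartbeats 1000000

open Metric Complex Set


lemma schwarz2 (K : ℝ) (G : ℂ × ℂ → ℂ)
    (hd : ∀ p : ℂ × ℂ, ‖p.1‖ < 1 → ‖p.2‖ < 1 → DifferentiableAt ℂ G p)
    (h0x : ∀ x : ℂ, ‖x‖ < 1 → G (x, 0) = 0)
    (h0y : ∀ y : ℂ, ‖y‖ < 1 → G (0, y) = 0)
    (hbd : ∀ p : ℂ × ℂ, ‖p.1‖ < 1/2 → ‖p.2‖ < 1/2 → ‖G p‖ < K) :
    ∀ x y : ℂ, ‖x‖ < 1/2 → ‖y‖ < 1/2 → ‖G (x, y)‖ ≤ 4*K*(‖x‖*‖y‖) := by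
  -- step 1 : ‖G (x,y)‖ ≤ 2K‖x‖
  have step1 : ∀ x y : ℂ, ‖x‖ < 1/2 → ‖y‖ < 1/2 → ‖G (x, y)‖ ≤ 2*K*‖x‖ := by
    intro x y hx hy
    set f : ℂ → ℂ := fun z => G (z, y) with hf
    have hf0 : f 0 = 0 := h0y y (by linarith)
    have hdf : DifferentiableOn ℂ f (ball (0:ℂ) (1/2)) := by
      intro z hz
      have hz' : ‖z‖ < 1/2 := by simpa [mem_ball_zero_iff] using hz
      exact ((hd (z, y) (show ‖z‖ < 1 by linarith) (show ‖y‖ < 1 by linarith)).comp z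
        ((differentiableAt_id.prodMk (differentiableAt_const y)))).differentiableWithinAt
    have hmaps : Set.MapsTo f (ball (0:ℂ) (1/2)) (ball (f 0) K) := by
      intro z hz
      have hz' : ‖z‖ < 1/2 := by simpa [mem_ball_zero_iff] using hz
      have := hbd (z, y) (by simpa using hz') (by simpa using hy)
      simp only [hf0, mem_ball_zero_iff]
      exact this
    have hxball : x ∈ ball (0:ℂ) (1/2) := by simpa [mem_ball_zero_iff] using hx
    have := Complex.dist_le_div_mul_dist_of_mapsTo_ball hdf (hmaps.mono_right ball_subset_closedBall) hxball
    rw [hf0, dist_zero_right, dist_zero_right] at this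
    calc ‖G (x, y)‖ = ‖f x‖ := rfl
      _ ≤ K / (1/2) * ‖x‖ := this
      _ = 2*K*‖x‖ := by ring
  intro x y hx hy
  rcases le_or_gt ‖x‖ 0 with h0 | h0
  · have : x = 0 := by simpa using le_antisymm h0 (norm_nonneg x)
    subst this
    have hK : 0 < K := lt_of_le_of_lt (norm_nonneg _) (hbd (0,0) (by norm_num) (by norm_num))
    rw [h0y y (by linarith)]
    simp
  · refine le_of_forall_pos_le_add (fun ε hε => ?_)
    set g : ℂ → ℂ := fun w => G (x, w) with hg
    have hg0 : g 0 = 0 := h0x x (by linarith)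
    have hdg : DifferentiableOn ℂ g (ball (0:ℂ) (1/2)) := by
      intro w hw
      have hw' : ‖w‖ < 1/2 := by simpa [mem_ball_zero_iff] using hw
      exact ((hd (x, w) (show ‖x‖ < 1 by linarith) (show ‖w‖ < 1 by linarith)).comp w
        ((differentiableAt_const x).prodMk differentiableAt_id)).differentiableWithinAt
    have hmaps : Set.MapsTo g (ball (0:ℂ) (1/2)) (ball (g 0) (2*K*‖x‖ + ε/2)) := by
      intro w hw
      have hw' : ‖w‖ < 1/2 := by simpa [mem_ball_zero_iff] using hw
      have := step1 x w hx hw'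
      simp only [hg0, mem_ball_zero_iff]
      calc ‖g w‖ ≤ 2*K*‖x‖ := this
        _ < 2*K*‖x‖ + ε/2 := by linarith
    have hyball : y ∈ ball (0:ℂ) (1/2) := by simpa [mem_ball_zero_iff] using hy
    have := Complex.dist_le_div_mul_dist_of_mapsTo_ball hdg (hmaps.mono_right ball_subset_closedBall) hyball
    rw [hg0, dist_zero_right, dist_zero_right] at this
    have hy1 : ‖y‖ ≤ 1 := by linarith
    calc ‖G (x, y)‖ = ‖g y‖ := rfl
      _ ≤ (2*K*‖x‖ + ε/2) / (1/2) * ‖y‖ := this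
      _ = 4*K*(‖x‖*‖y‖) + ε * ‖y‖ := by ring
      _ ≤ 4*K*(‖x‖*‖y‖) + ε := by nlinarith [norm_nonneg y]


theorem stmt10_analytic (lam mu : ℂ) (hlam0 : 0 < ‖lam‖) (hlam1 : ‖lam‖ < 1) (hmu : 1 < ‖mu‖)
    (F : ℂ × ℂ → ℂ × ℂ)
    (hF : ∀ p : ℂ × ℂ, ‖p.1‖ < 1 → ‖p.2‖ < 1 → DifferentiableAt ℂ F p)
    (hsx : ∀ x : ℂ, ‖x‖ < 1 → F (x, 0) = (lam * x, 0))
    (hsy : ∀ y : ℂ, ‖y‖ < 1 → F (0, y) = (0, mu * y)) :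
    ∃ M : ℝ, 0 < M ∧ ∀ p : ℂ × ℂ, ‖p.1‖ < 1/2 → ‖p.2‖ < 1/2 →
      ‖(F p).1 - lam * p.1‖ ≤ M * (‖p.1‖*‖p.2‖) ∧
      ‖(F p).2 - mu * p.2‖ ≤ M * (‖p.1‖*‖p.2‖) := by
  -- bound F on the closed polydisk of radius 1/2
  have hS : IsCompact ((closedBall (0:ℂ) (1/2)) ×ˢ (closedBall (0:ℂ) (1/2))) :=
    (isCompact_closedBall _ _).prod (isCompact_closedBall _ _)
  have hmem : ∀ p : ℂ × ℂ, p ∈ (closedBall (0:ℂ) (1/2)) ×ˢ (closedBall (0:ℂ) (1/2)) →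
      ‖p.1‖ < 1 ∧ ‖p.2‖ < 1 := by
    intro p hp
    rw [Set.mem_prod, mem_closedBall_zero_iff, mem_closedBall_zero_iff] at hp
    constructor <;> linarith [hp.1, hp.2]
  have hcont : ContinuousOn F ((closedBall (0:ℂ) (1/2)) ×ˢ (closedBall (0:ℂ) (1/2))) := by
    intro p hp
    exact (hF p (hmem p hp).1 (hmem p hp).2).continuousAt.continuousWithinAt
  obtain ⟨K0, hK0⟩ := hS.exists_bound_of_continuousOn hcont
  have hK0nn : 0 ≤ K0 := le_trans (norm_nonneg _) (hK0 (0,0) (by simp))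
  set K : ℝ := K0 + ‖lam‖ + ‖mu‖ + 1 with hKdef
  have hKpos : 0 < K := by positivity
  have key : ∀ (G : ℂ × ℂ → ℂ)
      (_ : ∀ p : ℂ × ℂ, ‖p.1‖ < 1 → ‖p.2‖ < 1 → DifferentiableAt ℂ G p)
      (_ : ∀ x : ℂ, ‖x‖ < 1 → G (x, 0) = 0)
      (_ : ∀ y : ℂ, ‖y‖ < 1 → G (0, y) = 0)
      (_ : ∀ p : ℂ × ℂ, ‖p.1‖ < 1/2 → ‖p.2‖ < 1/2 → ‖G p‖ < K),
      ∀ x y : ℂ, ‖x‖ < 1/2 → ‖y‖ < 1/2 → ‖G (x, y)‖ ≤ 4*K*(‖x‖*‖y‖) :=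
    fun G hd h0x h0y hbd => schwarz2 K G hd h0x h0y hbd
  refine ⟨4*K, by positivity, ?_⟩
  intro p hp1 hp2
  have hb1 : ∀ q : ℂ × ℂ, ‖q.1‖ < 1/2 → ‖q.2‖ < 1/2 → ‖(F q).1 - lam * q.1‖ < K := by
    intro q h1 h2
    have hqS : q ∈ (closedBall (0:ℂ) (1/2)) ×ˢ (closedBall (0:ℂ) (1/2)) := by
      rw [Set.mem_prod, mem_closedBall_zero_iff, mem_closedBall_zero_iff]
      constructor <;> linarith
    have h3 : ‖(F q).1‖ ≤ K0 := le_trans (norm_fst_le _) (hK0 q hqS)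
    have h4 : ‖lam * q.1‖ ≤ ‖lam‖ := by
      rw [norm_mul]
      nlinarith [norm_nonneg lam]
    calc ‖(F q).1 - lam * q.1‖ ≤ ‖(F q).1‖ + ‖lam * q.1‖ := norm_sub_le _ _
      _ ≤ K0 + ‖lam‖ := by linarith
      _ < K := by nlinarith [norm_nonneg mu]
  have hb2 : ∀ q : ℂ × ℂ, ‖q.1‖ < 1/2 → ‖q.2‖ < 1/2 → ‖(F q).2 - mu * q.2‖ < K := by
    intro q h1 h2
    have hqS : q ∈ (closedBall (0:ℂ) (1/2)) ×ˢ (closedBall (0:ℂ) (1/2)) := by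
      rw [Set.mem_prod, mem_closedBall_zero_iff, mem_closedBall_zero_iff]
      constructor <;> linarith
    have h3 : ‖(F q).2‖ ≤ K0 := le_trans (norm_snd_le _) (hK0 q hqS)
    have h4 : ‖mu * q.2‖ ≤ ‖mu‖ := by
      rw [norm_mul]
      nlinarith [norm_nonneg mu]
    calc ‖(F q).2 - mu * q.2‖ ≤ ‖(F q).2‖ + ‖mu * q.2‖ := norm_sub_le _ _
      _ ≤ K0 + ‖mu‖ := by linarith
      _ < K := by nlinarith [norm_nonneg lam]
  constructor
  · have := key (fun q => (F q).1 - lam * q.1)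
      (fun q h1 h2 => ((hF q h1 h2).fst).sub ((differentiableAt_fst).const_mul lam))
      (fun x hx => by simp [hsx x hx])
      (fun y hy => by simp [hsy y hy])
      hb1 p.1 p.2 hp1 hp2
    simpa using this
  · have := key (fun q => (F q).2 - mu * q.2)
      (fun q h1 h2 => ((hF q h1 h2).snd).sub ((differentiableAt_snd).const_mul mu))
      (fun x hx => by simp [hsx x hx])
      (fun y hy => by simp [hsy y hy])
      hb2 p.1 p.2 hp1 hp2
    simpa using this


lemma exp_neg_two_le' (t : ℝ) (h0 : 0 ≤ t) (h2 : t ≤ 1/2) : Real.exp (-(2*t)) ≤ 1 - t := by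
  rw [Real.exp_neg, inv_le_iff_one_le_mul₀ (Real.exp_pos _)]
  nlinarith [Real.add_one_le_exp (2*t)]

lemma orbit_lemma (lam mu : ℂ) (hlam0 : 0 < ‖lam‖) (hlam1 : ‖lam‖ < 1) (hmu : 1 < ‖mu‖)
    (F : ℂ × ℂ → ℂ × ℂ) (M : ℝ) (hM : 0 < M)
    (hG : ∀ p : ℂ × ℂ, ‖p.1‖ < 1/2 → ‖p.2‖ < 1/2 →
      ‖(F p).1 - lam * p.1‖ ≤ M * (‖p.1‖*‖p.2‖) ∧
      ‖(F p).2 - mu * p.2‖ ≤ M * (‖p.1‖*‖p.2‖)) :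
    ∃ r : ℝ, 0 < r ∧ r < 1 ∧ ∃ C : ℝ, 0 < C ∧
      ∀ (n : ℕ) (p : ℕ → ℂ × ℂ),
        (∀ k, k ≤ n → ‖(p k).1‖ ≤ r ∧ ‖(p k).2‖ ≤ r) →
        (∀ k, k < n → p (k + 1) = F (p k)) →
        ∀ k, k ≤ n →
          ‖(p k).1‖ ≤ C * ‖lam‖ ^ k ∧ ‖(p k).2‖ ≤ C * (‖mu‖ ^ (n - k))⁻¹ := by
  set ε : ℝ := min ((1-‖lam‖)/2) (min ((‖mu‖-1)/2) (1/2)) with hε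
  have hε0 : 0 < ε := by
    apply lt_min (by linarith)
    apply lt_min (by linarith)
    norm_num
  have hε1 : ε ≤ (1-‖lam‖)/2 := min_le_left _ _
  have hε2 : ε ≤ (‖mu‖-1)/2 := le_trans (min_le_right _ _) (min_le_left _ _)
  have hε3 : ε ≤ 1/2 := le_trans (min_le_right _ _) (min_le_right _ _)
  set r : ℝ := min (1/4) (ε/(M+1)) with hrdef
  have hr0 : 0 < r := lt_min (by norm_num) (by positivity)
  have hr14 : r ≤ 1/4 := min_le_left _ _
  have hMr : M * r ≤ ε := by
    have h1 : r ≤ ε/(M+1) := min_le_right _ _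
    have : M * r ≤ (M+1) * (ε/(M+1)) := by nlinarith
    rw [mul_div_cancel₀ _ (by positivity)] at this
    linarith
  set L : ℝ := ‖lam‖ + M*r with hLdef
  have hL0 : 0 < L := by positivity
  have hL1 : L < 1 := by simp only [hLdef]; linarith
  set U : ℝ := ‖mu‖ - M*r with hUdef
  have hU1 : 1 < U := by simp only [hUdef]; linarith
  have hU0 : 0 < U := by linarith
  set q : ℝ := U⁻¹ with hqdef
  have hq0 : 0 < q := by positivity
  have hq1 : q < 1 := by
    rw [hqdef, inv_lt_one_iff₀]; right; exact hU1
  set c : ℝ := M*r/‖lam‖ with hcdef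
  have hc0 : 0 ≤ c := by positivity
  set d : ℝ := 2*M*r/‖mu‖ with hddef
  have hd0 : 0 ≤ d := by positivity
  set E : ℝ := c*q/(1-q) + d/(1-L) with hEdef
  have hE0 : 0 ≤ E := by
    apply add_nonneg
    · apply div_nonneg (by positivity); linarith
    · apply div_nonneg hd0; linarith
  refine ⟨r, hr0, by linarith, r * Real.exp E, by positivity, ?_⟩
  intro n p hin hit
  -- basic facts about the orbit points
  have hsmall : ∀ k, k ≤ n → ‖(p k).1‖ < 1/2 ∧ ‖(p k).2‖ < 1/2 := by
    intro k hk
    obtain ⟨h1, h2⟩ := hin k hk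
    constructor <;> linarith
  have hG1 : ∀ k, k ≤ n → ‖(F (p k)).1 - lam * (p k).1‖ ≤ M * (‖(p k).1‖*‖(p k).2‖) :=
    fun k hk => (hG (p k) (hsmall k hk).1 (hsmall k hk).2).1
  have hG2 : ∀ k, k ≤ n → ‖(F (p k)).2 - mu * (p k).2‖ ≤ M * (‖(p k).1‖*‖(p k).2‖) :=
    fun k hk => (hG (p k) (hsmall k hk).1 (hsmall k hk).2).2
  -- step bounds
  have hx_step : ∀ k, k < n → ‖(p (k+1)).1‖ ≤ (‖lam‖ + M*‖(p k).2‖) * ‖(p k).1‖ := by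
    intro k hk
    have h1 := hG1 k (le_of_lt hk)
    rw [hit k hk]
    calc ‖(F (p k)).1‖ = ‖lam * (p k).1 + ((F (p k)).1 - lam * (p k).1)‖ := by ring_nf
      _ ≤ ‖lam * (p k).1‖ + ‖(F (p k)).1 - lam * (p k).1‖ := norm_add_le _ _
      _ ≤ ‖lam‖*‖(p k).1‖ + M * (‖(p k).1‖*‖(p k).2‖) := by rw [norm_mul]; linarith
      _ = (‖lam‖ + M*‖(p k).2‖) * ‖(p k).1‖ := by ring
  have hy_step : ∀ k, k < n → (‖mu‖ - M*‖(p k).1‖) * ‖(p k).2‖ ≤ ‖(p (k+1)).2‖ := by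
    intro k hk
    have h2 := hG2 k (le_of_lt hk)
    rw [hit k hk]
    have h3 : ‖mu * (p k).2‖ ≤ ‖(F (p k)).2‖ + ‖(F (p k)).2 - mu * (p k).2‖ := by
      calc ‖mu * (p k).2‖ = ‖(F (p k)).2 - ((F (p k)).2 - mu * (p k).2)‖ := by ring_nf
        _ ≤ ‖(F (p k)).2‖ + ‖(F (p k)).2 - mu * (p k).2‖ := norm_sub_le _ _
    rw [norm_mul] at h3
    nlinarith [norm_nonneg ((p k).2)]
  -- crude bounds
  have Xcrude : ∀ k, k ≤ n → ‖(p k).1‖ ≤ r * L^k := by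
    intro k
    induction k with
    | zero => intro hk; simpa using (hin 0 hk).1
    | succ k ih =>
      intro hk
      have hk' : k < n := by omega
      have ihk := ih (by omega)
      have h1 := hx_step k hk'
      have h2 : ‖(p k).2‖ ≤ r := (hin k (by omega)).2
      have h3 : ‖lam‖ + M*‖(p k).2‖ ≤ L := by
        simp only [hLdef]; nlinarith
      calc ‖(p (k+1)).1‖ ≤ (‖lam‖ + M*‖(p k).2‖) * ‖(p k).1‖ := h1
        _ ≤ L * (r * L^k) := by
            apply mul_le_mul h3 ihk (norm_nonneg _) (le_of_lt hL0)
        _ = r * L^(k+1) := by ring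
  have Ycrude : ∀ m k, k + m = n → ‖(p k).2‖ ≤ r * q^m := by
    intro m
    induction m with
    | zero => intro k hk; simp only [pow_zero, mul_one]; exact (hin k (by omega)).2
    | succ m ih =>
      intro k hk
      have hk' : k < n := by omega
      have ihk := ih (k+1) (by omega)
      have h1 := hy_step k hk'
      have h2 : ‖(p k).1‖ ≤ r := (hin k (by omega)).1
      have h3 : U ≤ ‖mu‖ - M*‖(p k).1‖ := by
        simp only [hUdef]; nlinarith
      have h4 : U * ‖(p k).2‖ ≤ ‖(p (k+1)).2‖ := by
        nlinarith [norm_nonneg ((p k).2)]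
      have h5 : ‖(p k).2‖ ≤ q * ‖(p (k+1)).2‖ := by
        have h6 := mul_le_mul_of_nonneg_left h4 (le_of_lt (inv_pos.mpr hU0))
        rw [← mul_assoc, inv_mul_cancel₀ (ne_of_gt hU0), one_mul] at h6
        rw [hqdef]
        exact h6
      calc ‖(p k).2‖ ≤ q * ‖(p (k+1)).2‖ := h5
        _ ≤ q * (r * q^m) := by nlinarith
        _ = r * q^(m+1) := by ring
  -- sharp x bound
  have Xsharp : ∀ k, k ≤ n → ‖(p k).1‖ ≤ r * ‖lam‖^k * Real.exp (c * q^(n-k+1)/(1-q)) := by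
    intro k
    induction k with
    | zero =>
      intro hk
      have h1 : (1:ℝ) ≤ Real.exp (c * q^(n-0+1)/(1-q)) := by
        rw [Real.one_le_exp_iff]
        apply div_nonneg (by positivity); linarith
      have h2 := (hin 0 hk).1
      calc ‖(p 0).1‖ ≤ r := h2
        _ ≤ r * ‖lam‖^0 * Real.exp (c * q^(n-0+1)/(1-q)) := by
            rw [pow_zero, mul_one]; nlinarith
    | succ k ih =>
      intro hk
      have hk' : k < n := by omega
      have ihk := ih (by omega)
      have hyc : ‖(p k).2‖ ≤ r * q^(n-k) := Ycrude (n-k) k (by omega)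
      have h1 := hx_step k hk'
      have h2 : ‖lam‖ + M*‖(p k).2‖ ≤ ‖lam‖ * Real.exp (c * q^(n-k)) := by
        have hln : ‖lam‖ ≠ 0 := ne_of_gt hlam0
        have e1 : ‖lam‖ + M*(r * q^(n-k)) = ‖lam‖ * (1 + c * q^(n-k)) := by
          rw [hcdef]
          first
          | (field_simp; ring)
          | field_simp
        have e2 : (1 + c * q^(n-k)) ≤ Real.exp (c * q^(n-k)) := by
          have := Real.add_one_le_exp (c * q^(n-k)); linarith
        have e3 : M*‖(p k).2‖ ≤ M*(r * q^(n-k)) := by nlinarith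
        calc ‖lam‖ + M*‖(p k).2‖ ≤ ‖lam‖ * (1 + c * q^(n-k)) := by rw [← e1]; linarith
          _ ≤ ‖lam‖ * Real.exp (c * q^(n-k)) := by nlinarith
      have h3 : ‖(p (k+1)).1‖ ≤ (‖lam‖ * Real.exp (c * q^(n-k))) * (r * ‖lam‖^k * Real.exp (c * q^(n-k+1)/(1-q))) := by
        calc ‖(p (k+1)).1‖ ≤ (‖lam‖ + M*‖(p k).2‖) * ‖(p k).1‖ := h1
          _ ≤ (‖lam‖ * Real.exp (c * q^(n-k))) * (r * ‖lam‖^k * Real.exp (c * q^(n-k+1)/(1-q))) := by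
              apply mul_le_mul h2 ihk (norm_nonneg _) (by positivity)
      have hident : c * q^(n-k+1)/(1-q) + c * q^(n-k) = c * q^(n-(k+1)+1)/(1-q) := by
        have hnk : n-(k+1)+1 = n-k := by omega
        have hnk2 : n-k+1 = (n-k)+1 := rfl
        rw [hnk, hnk2, pow_succ]
        have h1q : (1:ℝ) - q ≠ 0 := by linarith
        field_simp
        ring
      calc ‖(p (k+1)).1‖ ≤ (‖lam‖ * Real.exp (c * q^(n-k))) * (r * ‖lam‖^k * Real.exp (c * q^(n-k+1)/(1-q))) := h3
        _ = r * ‖lam‖^(k+1) * Real.exp (c * q^(n-k+1)/(1-q) + c * q^(n-k)) := by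
            rw [Real.exp_add]; ring
        _ = r * ‖lam‖^(k+1) * Real.exp (c * q^(n-(k+1)+1)/(1-q)) := by rw [hident]
  -- sharp y bound
  have Ysharp : ∀ m k, k + m = n → ‖(p k).2‖ ≤ r * (‖mu‖^m)⁻¹ * Real.exp (d * L^k/(1-L)) := by
    intro m
    induction m with
    | zero =>
      intro k hk
      have h1 : (1:ℝ) ≤ Real.exp (d * L^k/(1-L)) := by
        rw [Real.one_le_exp_iff]
        apply div_nonneg (by positivity); linarith
      have h2 := (hin k (by omega)).2
      simp only [pow_zero, inv_one, mul_one]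
      nlinarith
    | succ m ih =>
      intro k hk
      have hk' : k < n := by omega
      have ihk := ih (k+1) (by omega)
      have hxc : ‖(p k).1‖ ≤ r * L^k := Xcrude k (by omega)
      have hLk1 : L^k ≤ 1 := pow_le_one₀ (le_of_lt hL0) (le_of_lt hL1)
      have hmu0 : (0:ℝ) < ‖mu‖ := by linarith
      -- the exponential lower bound for the multiplier
      have hkey : ‖mu‖ * Real.exp (-(d * L^k)) ≤ ‖mu‖ - M*‖(p k).1‖ := by
        set s : ℝ := M*‖(p k).1‖/‖mu‖ with hsdef
        have hs0 : 0 ≤ s := by positivity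
        have hxr : ‖(p k).1‖ ≤ r := (hin k (by omega)).1
        have hs12 : s ≤ 1/2 := by
          have h1 : M*‖(p k).1‖ ≤ M*r := by nlinarith
          have h2 : M*r ≤ 1/2 := by linarith
          rw [hsdef, div_le_iff₀ hmu0]
          nlinarith
        have h3 : 2*s ≤ d * L^k := by
          have hnum : 2*(M*‖(p k).1‖) ≤ 2*M*r*L^k := by nlinarith
          calc 2*s = 2*(M*‖(p k).1‖)/‖mu‖ := by rw [hsdef]; ring
            _ ≤ 2*M*r*L^k/‖mu‖ := by gcongr
            _ = d * L^k := by rw [hddef]; ring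
        have h4 : Real.exp (-(d * L^k)) ≤ Real.exp (-(2*s)) := by
          apply Real.exp_le_exp.mpr; linarith
        have h5 : Real.exp (-(2*s)) ≤ 1 - s := exp_neg_two_le' s hs0 hs12
        have hmn : ‖mu‖ ≠ 0 := ne_of_gt hmu0
        have h6 : ‖mu‖ * (1 - s) = ‖mu‖ - M*‖(p k).1‖ := by
          rw [hsdef]
          first
          | (field_simp; ring)
          | field_simp
        calc ‖mu‖ * Real.exp (-(d * L^k)) ≤ ‖mu‖ * (1 - s) :=
              mul_le_mul_of_nonneg_left (le_trans h4 h5) hmu0.le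
          _ = ‖mu‖ - M*‖(p k).1‖ := h6
      have h7 : (‖mu‖ * Real.exp (-(d * L^k))) * ‖(p k).2‖ ≤ ‖(p (k+1)).2‖ :=
        le_trans (mul_le_mul_of_nonneg_right hkey (norm_nonneg _)) (hy_step k hk')
      have hpos : (0:ℝ) < ‖mu‖ * Real.exp (-(d * L^k)) := by positivity
      have h8 : ‖(p k).2‖ ≤ ‖(p (k+1)).2‖ * ‖mu‖⁻¹ * Real.exp (d * L^k) := by
        have h6 := mul_le_mul_of_nonneg_left h7 (le_of_lt (inv_pos.mpr hpos))
        rw [← mul_assoc, inv_mul_cancel₀ (ne_of_gt hpos), one_mul] at h6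
        refine le_trans h6 (le_of_eq ?_)
        rw [mul_inv, Real.exp_neg, inv_inv]
        ring
      have hident : d * L^(k+1)/(1-L) + d * L^k = d * L^k/(1-L) := by
        rw [pow_succ]
        have h1L : (1:ℝ) - L ≠ 0 := by linarith
        field_simp
        ring
      have h9 : ‖(p (k+1)).2‖ * ‖mu‖⁻¹ * Real.exp (d * L^k) ≤
          (r * (‖mu‖^m)⁻¹ * Real.exp (d * L^(k+1)/(1-L))) * ‖mu‖⁻¹ * Real.exp (d * L^k) :=
        mul_le_mul_of_nonneg_right
          (mul_le_mul_of_nonneg_right ihk (inv_pos.mpr hmu0).le) (Real.exp_pos _).le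
      calc ‖(p k).2‖ ≤ ‖(p (k+1)).2‖ * ‖mu‖⁻¹ * Real.exp (d * L^k) := h8
        _ ≤ (r * (‖mu‖^m)⁻¹ * Real.exp (d * L^(k+1)/(1-L))) * ‖mu‖⁻¹ * Real.exp (d * L^k) := h9
        _ = r * (‖mu‖^(m+1))⁻¹ * Real.exp (d * L^(k+1)/(1-L) + d * L^k) := by
            rw [Real.exp_add, pow_succ ‖mu‖ m, mul_inv]
            ring
        _ = r * (‖mu‖^(m+1))⁻¹ * Real.exp (d * L^k/(1-L)) := by rw [hident]
  -- conclusion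
  intro k hk
  have hq1' : (0:ℝ) < 1 - q := by linarith
  have hL1' : (0:ℝ) < 1 - L := by linarith
  constructor
  · have h1 := Xsharp k hk
    have h2 : c * q^(n-k+1)/(1-q) ≤ E := by
      rw [hEdef]
      have h3 : q^(n-k+1) ≤ q := by
        calc q^(n-k+1) ≤ q^1 := pow_le_pow_of_le_one (le_of_lt hq0) (le_of_lt hq1) (by omega)
          _ = q := pow_one q
      have h4 : c * q^(n-k+1)/(1-q) ≤ c*q/(1-q) :=
        (div_le_div_iff_of_pos_right hq1').mpr (mul_le_mul_of_nonneg_left h3 hc0)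
      have h5 : 0 ≤ d/(1-L) := div_nonneg hd0 (le_of_lt hL1')
      linarith
    have h6 : Real.exp (c * q^(n-k+1)/(1-q)) ≤ Real.exp E := Real.exp_le_exp.mpr h2
    calc ‖(p k).1‖ ≤ r * ‖lam‖^k * Real.exp (c * q^(n-k+1)/(1-q)) := h1
      _ ≤ r * ‖lam‖^k * Real.exp E :=
          mul_le_mul_of_nonneg_left h6 (by positivity)
      _ = r * Real.exp E * ‖lam‖^k := by ring
  · have h1 := Ysharp (n-k) k (by omega)
    have h2 : d * L^k/(1-L) ≤ E := by
      rw [hEdef]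
      have h3 : L^k ≤ 1 := pow_le_one₀ (le_of_lt hL0) (le_of_lt hL1)
      have h4 : d * L^k/(1-L) ≤ d/(1-L) := by
        have h4' : d * L^k ≤ d := by
          have := mul_le_mul_of_nonneg_left h3 hd0
          rwa [mul_one] at this
        exact (div_le_div_iff_of_pos_right hL1').mpr h4'
      have h5 : 0 ≤ c*q/(1-q) := by
        apply div_nonneg (by positivity); linarith
      linarith
    have h6 : Real.exp (d * L^k/(1-L)) ≤ Real.exp E := Real.exp_le_exp.mpr h2
    have hmu0 : (0:ℝ) < ‖mu‖ := by linarith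
    calc ‖(p k).2‖ ≤ r * (‖mu‖^(n-k))⁻¹ * Real.exp (d * L^k/(1-L)) := h1
      _ ≤ r * (‖mu‖^(n-k))⁻¹ * Real.exp E :=
          mul_le_mul_of_nonneg_left h6 (by positivity)
      _ = r * Real.exp E * (‖mu‖^(n-k))⁻¹ := by ring

/-- Lemma 3.2. For a holomorphic map in semi-linearizing coordinates on
the unit polydisk, orbits staying in a (shrunken) polydisk of radius `r` for `n` steps
satisfy `x_k = O(|λ|^k)` and `y_k = O(|μ|^{-(n-k)})`, uniformly in `n`. -/
theorem stmt_10 (lam mu : ℂ) (hlam0 : 0 < ‖lam‖) (hlam1 : ‖lam‖ < 1) (hmu : 1 < ‖mu‖)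
    (F : ℂ × ℂ → ℂ × ℂ)
    (hF : ∀ p : ℂ × ℂ, ‖p.1‖ < 1 → ‖p.2‖ < 1 → DifferentiableAt ℂ F p)
    (hsx : ∀ x : ℂ, ‖x‖ < 1 → F (x, 0) = (lam * x, 0))
    (hsy : ∀ y : ℂ, ‖y‖ < 1 → F (0, y) = (0, mu * y)) :
    ∃ r : ℝ, 0 < r ∧ r < 1 ∧ ∃ C : ℝ, 0 < C ∧
      ∀ (n : ℕ) (p : ℕ → ℂ × ℂ),
        (∀ k, k ≤ n → ‖(p k).1‖ ≤ r ∧ ‖(p k).2‖ ≤ r) →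
        (∀ k, k < n → p (k + 1) = F (p k)) →
        ∀ k, k ≤ n →
          ‖(p k).1‖ ≤ C * ‖lam‖ ^ k ∧ ‖(p k).2‖ ≤ C * (‖mu‖ ^ (n - k))⁻¹ := by
  obtain ⟨M, hM, hG⟩ := stmt10_analytic lam mu hlam0 hlam1 hmu F hF hsx hsy
  exact orbit_lemma lam mu hlam0 hlam1 hmu F M hM hG
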